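/- arXiv:1309.3241 — 3 statements merged into one kernel-verified Lean document; each statement's English description precedes it below -/
import Mathlib

section
/- Let g be a generalized Hermite kernel of order k with homogeneity exponent α, and set H = α + k/2 + 1 ∈ (1/2,1). Then for every t > 0: (i) ∫_0^t |g(s·1 − x)| ds < ∞ for almost every x ∈ ℝ^k; (ii) the function h_t(x) = ∫_0^t g(s·1 − x) ds belongs to L²(ℝ^k); and (iii) ∫_{ℝ^k} h_t(x)² dx = (t^{2H} / (H(2H−1))) · ∫_{(0,∞)^k} g(y) g(1+y) dy. -/
open MeasureTheory Filter

noncomputable section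

/-- The open positive orthant `(0,∞)^k` in `ℝ^k`. -/
def posOrthant (k : ℕ) : Set (Fin k → ℝ) := {x | ∀ j, 0 < x j}

/-- A generalized Hermite kernel of order `k` with homogeneity exponent `α`:
a nonzero measurable function on `(0,∞)^k`, extended by `0` off the positive orthant,
homogeneous of exponent `α ∈ (-(k+1)/2, -k/2)`, satisfying the integrability condition
`∫_{(0,∞)^k} |g(x) g(1+x)| dx < ∞`. -/
structure IsGenHermiteKernel (k : ℕ) (α : ℝ) (g : (Fin k → ℝ) → ℝ) : Prop where
  measurable : Measurable g
  zero_off : ∀ x : Fin k → ℝ, x ∉ posOrthant k → g x = 0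
  nonzero : ¬ (∀ᵐ x ∂(volume.restrict (posOrthant k)), g x = 0)
  homog : ∀ lam : ℝ, 0 < lam → ∀ x ∈ posOrthant k, g (lam • x) = lam ^ α * g x
  alpha_lb : -((k : ℝ) + 1) / 2 < α
  alpha_ub : α < -(k : ℝ) / 2
  int_cond : IntegrableOn (fun x => g x * g (1 + x)) (posOrthant k) volume

/-- `h_t(x) = ∫_0^t g(s·1 − x) ds`. -/
def hKer {k : ℕ} (g : (Fin k → ℝ) → ℝ) (t : ℝ) (x : Fin k → ℝ) : ℝ :=
  ∫ s in Set.Ioc (0 : ℝ) t, g (fun j => s - x j)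

section AuxHermite
open Set

section OneD

variable {β t : ℝ}

lemma inner_integrable (hβ : -1 < β) {s : ℝ} (hs : s ∈ Set.Ioc 0 t) :
    IntegrableOn (fun u => |u - s| ^ β) (Set.Ioc 0 t) volume := by
  obtain ⟨hs0, hst⟩ := hs
  have h1 : IntegrableOn (fun u => |u - s| ^ β) (Set.Ioc 0 s) volume := by
    have := (intervalIntegral.intervalIntegrable_rpow' (a := s) (b := 0) hβ).comp_sub_left s
    have h2 : IntegrableOn (fun u => (s - u) ^ β) (Set.Ioc 0 s) volume := by
      simpa [sub_self, sub_zero] using this.1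
    refine h2.congr_fun (fun u hu => ?_) measurableSet_Ioc
    rw [abs_of_nonpos (by linarith [hu.2])]
    ring_nf
  have h2 : IntegrableOn (fun u => |u - s| ^ β) (Set.Ioc s t) volume := by
    have := (intervalIntegral.intervalIntegrable_rpow' (a := s - s) (b := t - s) hβ).comp_sub_right s
    have h2 : IntegrableOn (fun u => (u - s) ^ β) (Set.Ioc s t) volume := by
      simpa [sub_self] using this.1
    refine h2.congr_fun (fun u hu => ?_) measurableSet_Ioc
    rw [abs_of_nonneg (by linarith [hu.1])]
  have := h1.union h2
  rwa [Set.Ioc_union_Ioc_eq_Ioc hs0.le hst] at this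

lemma inner_value (hβ : -1 < β) {s : ℝ} (hs : s ∈ Set.Ioc 0 t) :
    ∫ u in Set.Ioc 0 t, |u - s| ^ β = (s ^ (β + 1) + (t - s) ^ (β + 1)) / (β + 1) := by
  obtain ⟨hs0, hst⟩ := hs
  have hb1 : β + 1 ≠ 0 := by linarith
  have v1 : ∫ u in Set.Ioc 0 s, |u - s| ^ β = s ^ (β + 1) / (β + 1) := by
    have e1 : ∫ u in Set.Ioc 0 s, |u - s| ^ β = ∫ u in Set.Ioc 0 s, (s - u) ^ β := by
      refine setIntegral_congr_fun measurableSet_Ioc (fun u hu => ?_)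
      rw [abs_of_nonpos (by linarith [hu.2]), neg_sub]
    rw [e1, ← intervalIntegral.integral_of_le hs0.le,
      intervalIntegral.integral_comp_sub_left (fun v => v ^ β) s, sub_self, sub_zero,
      integral_rpow (Or.inl hβ), Real.zero_rpow hb1]
    ring
  have v2 : ∫ u in Set.Ioc s t, |u - s| ^ β = (t - s) ^ (β + 1) / (β + 1) := by
    have e1 : ∫ u in Set.Ioc s t, |u - s| ^ β = ∫ u in Set.Ioc s t, (u - s) ^ β := by
      refine setIntegral_congr_fun measurableSet_Ioc (fun u hu => ?_)
      rw [abs_of_nonneg (by linarith [hu.1])]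
    rw [e1, ← intervalIntegral.integral_of_le hst,
      intervalIntegral.integral_comp_sub_right (fun v => v ^ β) s, sub_self,
      integral_rpow (Or.inl hβ), Real.zero_rpow hb1]
    ring
  have hdis : Disjoint (Set.Ioc 0 s) (Set.Ioc s t) := Set.Ioc_disjoint_Ioc_of_le le_rfl
  have hun : Set.Ioc 0 s ∪ Set.Ioc s t = Set.Ioc 0 t := Set.Ioc_union_Ioc_eq_Ioc hs0.le hst
  have h1 : IntegrableOn (fun u => |u - s| ^ β) (Set.Ioc 0 s) volume :=
    (inner_integrable hβ ⟨hs0, hst⟩).mono_set (by rw [← hun]; exact Set.subset_union_left)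
  have h2 : IntegrableOn (fun u => |u - s| ^ β) (Set.Ioc s t) volume :=
    (inner_integrable hβ ⟨hs0, hst⟩).mono_set (by rw [← hun]; exact Set.subset_union_right)
  rw [← hun, setIntegral_union hdis measurableSet_Ioc h1 h2, v1, v2]
  ring

lemma outer_integrable (hβ : -1 < β) (ht : 0 < t) :
    IntegrableOn (fun s => (s ^ (β + 1) + (t - s) ^ (β + 1)) / (β + 1)) (Set.Ioc 0 t) volume := by
  have hβ1 : (-1 : ℝ) < β + 1 := by linarith
  have h1 : IntegrableOn (fun s : ℝ => s ^ (β + 1)) (Set.Ioc 0 t) volume :=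
    (intervalIntegral.intervalIntegrable_rpow' (a := 0) (b := t) hβ1).1
  have h2 : IntegrableOn (fun s : ℝ => (t - s) ^ (β + 1)) (Set.Ioc 0 t) volume := by
    have := (intervalIntegral.intervalIntegrable_rpow' (a := t) (b := 0) hβ1).comp_sub_left t
    simpa [sub_self, sub_zero] using this.1
  exact (h1.add h2).div_const _

lemma outer_value (hβ : -1 < β) (ht : 0 < t) :
    ∫ s in Set.Ioc 0 t, (s ^ (β + 1) + (t - s) ^ (β + 1)) / (β + 1)
      = 2 * t ^ (β + 2) / ((β + 1) * (β + 2)) := by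
  have hβ1 : (-1 : ℝ) < β + 1 := by linarith
  have hb2 : β + 1 + 1 = β + 2 := by ring
  have hb20 : β + 2 ≠ 0 := by linarith
  have h1 : IntegrableOn (fun s : ℝ => s ^ (β + 1)) (Set.Ioc 0 t) volume :=
    (intervalIntegral.intervalIntegrable_rpow' (a := 0) (b := t) hβ1).1
  have h2 : IntegrableOn (fun s : ℝ => (t - s) ^ (β + 1)) (Set.Ioc 0 t) volume := by
    have := (intervalIntegral.intervalIntegrable_rpow' (a := t) (b := 0) hβ1).comp_sub_left t
    simpa [sub_self, sub_zero] using this.1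
  have v1 : ∫ s in Set.Ioc 0 t, s ^ (β + 1) = t ^ (β + 2) / (β + 2) := by
    rw [← intervalIntegral.integral_of_le ht.le, integral_rpow (Or.inl hβ1),
      Real.zero_rpow (by linarith), hb2]
    ring
  have v2 : ∫ s in Set.Ioc 0 t, (t - s) ^ (β + 1) = t ^ (β + 2) / (β + 2) := by
    rw [← intervalIntegral.integral_of_le ht.le,
      intervalIntegral.integral_comp_sub_left (fun v => v ^ (β + 1)) t, sub_self, sub_zero,
      integral_rpow (Or.inl hβ1), Real.zero_rpow (by linarith), hb2]
    ring
  rw [integral_div, integral_add h1 h2, v1, v2]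
  field_simp
  ring

end OneD

section TwoD
variable {β t : ℝ}

lemma W_measurable : Measurable (fun p : ℝ × ℝ => |p.2 - p.1| ^ β) := by fun_prop

lemma W_integrable (hβ : -1 < β) (hβ0 : β < 0) (ht : 0 < t) :
    Integrable (fun p : ℝ × ℝ => |p.2 - p.1| ^ β)
      ((volume.restrict (Set.Ioc 0 t)).prod (volume.restrict (Set.Ioc 0 t))) := by
  refine (integrable_prod_iff W_measurable.aestronglyMeasurable).2 ⟨?_, ?_⟩
  · refine (ae_restrict_iff' measurableSet_Ioc).2 (Eventually.of_forall fun s hs => ?_)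
    exact inner_integrable hβ hs
  · refine (outer_integrable hβ ht).congr ?_
    refine (ae_restrict_iff' measurableSet_Ioc).2 (Eventually.of_forall fun s hs => ?_)
    have : ∀ u : ℝ, ‖|u - s| ^ β‖ = |u - s| ^ β := fun u =>
      Real.norm_of_nonneg (Real.rpow_nonneg (abs_nonneg _) _)
    simp only [this]
    exact (inner_value hβ hs).symm

lemma W_value (hβ : -1 < β) (hβ0 : β < 0) (ht : 0 < t) :
    ∫ p : ℝ × ℝ, |p.2 - p.1| ^ β
        ∂((volume.restrict (Set.Ioc 0 t)).prod (volume.restrict (Set.Ioc 0 t)))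
      = 2 * t ^ (β + 2) / ((β + 1) * (β + 2)) := by
  rw [integral_prod _ (W_integrable hβ hβ0 ht)]
  rw [← outer_value hβ ht]
  exact setIntegral_congr_fun measurableSet_Ioc (fun s hs => inner_value hβ hs)

lemma diag_null (ht : 0 < t) :
    ∀ᵐ p : ℝ × ℝ ∂((volume.restrict (Set.Ioc 0 t)).prod (volume.restrict (Set.Ioc 0 t))),
      p.1 ≠ p.2 := by
  set ν := volume.restrict (Set.Ioc (0:ℝ) t)
  have hD : MeasurableSet {p : ℝ × ℝ | p.1 = p.2} := measurableSet_eq_fun measurable_fst measurable_snd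
  rw [ae_iff]
  have : {p : ℝ × ℝ | ¬ p.1 ≠ p.2} = {p : ℝ × ℝ | p.1 = p.2} := by ext p; simp
  rw [this, Measure.prod_apply hD]
  have h0 : ∀ s : ℝ, ν (Prod.mk s ⁻¹' {p : ℝ × ℝ | p.1 = p.2}) = 0 := by
    intro s
    have : Prod.mk s ⁻¹' {p : ℝ × ℝ | p.1 = p.2} = {s} := by ext u; simp [eq_comm]
    rw [this]
    exact le_antisymm (le_trans (Measure.restrict_apply_le _ _) (by simp)) zero_le
  simp [h0]

end TwoD

variable {k : ℕ} {α : ℝ} {g : (Fin k → ℝ) → ℝ}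

example : (volume : Measure (Fin 2 → ℝ)).IsNegInvariant := inferInstance
example : (volume : Measure (Fin 2 → ℝ)).IsAddLeftInvariant := inferInstance

lemma smul_eval (hg : IsGenHermiteKernel k α g) {r : ℝ} (hr : 0 < r) (z : Fin k → ℝ) :
    g (r • z) = r ^ α * g z := by
  by_cases hz : z ∈ posOrthant k
  · exact hg.homog r hr z hz
  · have hz' : r • z ∉ posOrthant k := by
      intro h
      apply hz
      intro j
      have hj := h j
      simp only [Pi.smul_apply, smul_eq_mul] at hj
      nlinarith
    rw [hg.zero_off _ hz', hg.zero_off _ hz, mul_zero]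

lemma q_int (hg : IsGenHermiteKernel k α g) : Integrable (fun y => g y * g (1 + y)) volume :=
  hg.int_cond.integrable_of_forall_notMem_eq_zero
    (fun y hy => by rw [hg.zero_off y hy, zero_mul])

lemma fr_comp (hg : IsGenHermiteKernel k α g) {r : ℝ} (hr : 0 < r) :
    (fun z => (fun y => g y * g (r • (1 : Fin k → ℝ) + y)) (r • z))
      = fun z => r ^ (2*α) * (g z * g (1 + z)) := by
  funext z
  simp only [← smul_add]
  rw [smul_eval hg hr, smul_eval hg hr, two_mul, Real.rpow_add hr]
  ring

lemma lemA_pos (hg : IsGenHermiteKernel k α g) {r : ℝ} (hr : 0 < r) :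
    Integrable (fun y => g y * g (r • (1:Fin k → ℝ) + y)) volume ∧
    (∫ y, g y * g (r • (1:Fin k → ℝ) + y)) = r ^ (2*α + (k:ℝ)) * ∫ z, g z * g (1 + z) ∧
    (∫ y, ‖g y * g (r • (1:Fin k → ℝ) + y)‖) = r ^ (2*α + (k:ℝ)) * ∫ z, ‖g z * g (1 + z)‖ := by
  set f : (Fin k → ℝ) → ℝ := fun y => g y * g (r • (1:Fin k → ℝ) + y) with hf
  have hcomp : (fun z => f (r • z)) = fun z => r ^ (2*α) * (g z * g (1 + z)) := fr_comp hg hr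
  have hrk : |((r ^ Module.finrank ℝ (Fin k → ℝ)))⁻¹| = (r ^ (k:ℕ))⁻¹ := by
    rw [Module.finrank_fin_fun, abs_of_pos (by positivity)]
  have hpow : (r : ℝ) ^ (k : ℕ) * r ^ (2*α) = r ^ (2*α + (k:ℝ)) := by
    rw [Real.rpow_add hr, ← Real.rpow_natCast r k]
    ring
  have hrk0 : (r : ℝ) ^ (k : ℕ) ≠ 0 := by positivity
  refine ⟨?_, ?_, ?_⟩
  · rw [← integrable_comp_smul_iff volume f (ne_of_gt hr), hcomp]
    exact (q_int hg).const_mul _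
  · have h1 := MeasureTheory.Measure.integral_comp_smul volume f r
    rw [hcomp, hrk, smul_eq_mul, integral_const_mul] at h1
    have h2 : ∫ x, f x = r ^ (k:ℕ) * (r ^ (2*α) * ∫ z, g z * g (1 + z)) := by
      rw [h1]; field_simp
    rw [h2, ← hpow]; ring
  · have h1 := MeasureTheory.Measure.integral_comp_smul volume (fun y => ‖f y‖) r
    have hcomp' : (fun z => ‖f (r • z)‖) = fun z => r ^ (2*α) * ‖g z * g (1 + z)‖ := by
      funext z
      rw [show f (r • z) = r ^ (2*α) * (g z * g (1 + z)) from congrFun hcomp z, norm_mul,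
        Real.norm_of_nonneg (Real.rpow_nonneg hr.le _)]
    rw [hcomp', hrk, smul_eq_mul, integral_const_mul] at h1
    have h2 : ∫ x, ‖f x‖ = r ^ (k:ℕ) * (r ^ (2*α) * ∫ z, ‖g z * g (1 + z)‖) := by
      rw [h1]; field_simp
    rw [h2, ← hpow]; ring

lemma lemA (hg : IsGenHermiteKernel k α g) {r : ℝ} (hr : r ≠ 0) :
    Integrable (fun y => g y * g (r • (1:Fin k → ℝ) + y)) volume ∧
    (∫ y, g y * g (r • (1:Fin k → ℝ) + y)) = |r| ^ (2*α + (k:ℝ)) * ∫ z, g z * g (1 + z) ∧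
    (∫ y, ‖g y * g (r • (1:Fin k → ℝ) + y)‖) = |r| ^ (2*α + (k:ℝ)) * ∫ z, ‖g z * g (1 + z)‖ := by
  rcases hr.lt_or_gt with hneg | hpos
  · have hρ : (0:ℝ) < -r := by linarith
    set G : (Fin k → ℝ) → ℝ := fun w => g w * g ((-r) • (1:Fin k → ℝ) + w) with hG
    have key : ∀ y, g y * g (r • (1:Fin k → ℝ) + y) = G (r • (1:Fin k → ℝ) + y) := by
      intro y
      have : (-r) • (1:Fin k → ℝ) + (r • (1:Fin k → ℝ) + y) = y := by
        rw [← add_assoc, ← add_smul]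
        simp
      rw [hG]
      simp only [this]
      ring
    obtain ⟨hI, hV, hN⟩ := lemA_pos hg hρ
    have habs : |r| = -r := abs_of_neg hneg
    refine ⟨?_, ?_, ?_⟩
    · simp only [key]
      exact hI.comp_add_left _
    · calc ∫ y, g y * g (r • (1:Fin k → ℝ) + y) = ∫ y, G (r • (1:Fin k → ℝ) + y) := by
            simp only [key]
        _ = ∫ w, G w := integral_add_left_eq_self G (r • (1:Fin k → ℝ))
        _ = |r| ^ (2*α + (k:ℝ)) * ∫ z, g z * g (1 + z) := by rw [habs]; exact hV
    · calc ∫ y, ‖g y * g (r • (1:Fin k → ℝ) + y)‖ = ∫ y, ‖G (r • (1:Fin k → ℝ) + y)‖ := by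
            simp only [key]
        _ = ∫ w, ‖G w‖ := integral_add_left_eq_self (fun w => ‖G w‖) (r • (1:Fin k → ℝ))
        _ = |r| ^ (2*α + (k:ℝ)) * ∫ z, ‖g z * g (1 + z)‖ := by rw [habs]; exact hN
  · obtain ⟨hI, hV, hN⟩ := lemA_pos hg hpos
    rw [abs_of_pos hpos]
    exact ⟨hI, hV, hN⟩

lemma lemB (hg : IsGenHermiteKernel k α g) {s u : ℝ} (hsu : s ≠ u) :
    Integrable (fun x : Fin k → ℝ => g (fun j => s - x j) * g (fun j => u - x j)) volume ∧
    (∫ x : Fin k → ℝ, g (fun j => s - x j) * g (fun j => u - x j))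
      = |u - s| ^ (2*α + (k:ℝ)) * ∫ z, g z * g (1 + z) ∧
    (∫ x : Fin k → ℝ, ‖g (fun j => s - x j) * g (fun j => u - x j)‖)
      = |u - s| ^ (2*α + (k:ℝ)) * ∫ z, ‖g z * g (1 + z)‖ := by
  have hr : u - s ≠ 0 := sub_ne_zero.2 (Ne.symm hsu)
  set f : (Fin k → ℝ) → ℝ := fun y => g y * g ((u - s) • (1:Fin k → ℝ) + y) with hf
  set c : Fin k → ℝ := fun _ => s with hc
  have key : ∀ x : Fin k → ℝ,
      g (fun j => s - x j) * g (fun j => u - x j) = f (c - x) := by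
    intro x
    have h1 : (fun j => s - x j) = c - x := by funext j; simp [hc]
    have h2 : (fun j => u - x j) = (u - s) • (1:Fin k → ℝ) + (c - x) := by
      funext j
      simp [hc, Pi.smul_apply]
    rw [h1, h2]
  obtain ⟨hI, hV, hN⟩ := lemA hg hr
  refine ⟨?_, ?_, ?_⟩
  · simp only [key]
    exact hI.comp_sub_left c
  · calc ∫ x : Fin k → ℝ, g (fun j => s - x j) * g (fun j => u - x j) = ∫ x : Fin k → ℝ, f (c - x) := by simp only [key]
      _ = ∫ y, f y := integral_sub_left_eq_self f volume c
      _ = |u - s| ^ (2*α + (k:ℝ)) * ∫ z, g z * g (1 + z) := hV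
  · calc ∫ x : Fin k → ℝ, ‖g (fun j => s - x j) * g (fun j => u - x j)‖ = ∫ x : Fin k → ℝ, ‖f (c - x)‖ := by
          simp only [key]
      _ = ∫ y, ‖f y‖ := integral_sub_left_eq_self (fun y => ‖f y‖) volume c
      _ = |u - s| ^ (2*α + (k:ℝ)) * ∫ z, ‖g z * g (1 + z)‖ := hN



end AuxHermite

theorem stmt0 {k : ℕ} (hk : 1 ≤ k) {α : ℝ} {g : (Fin k → ℝ) → ℝ}
    (hg : IsGenHermiteKernel k α g) {t : ℝ} (ht : 0 < t) :
    (∀ᵐ x : Fin k → ℝ, IntegrableOn (fun s => g (fun j => s - x j)) (Set.Ioc 0 t) volume) ∧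
    MemLp (hKer g t) 2 volume ∧
    (∫ x : Fin k → ℝ, (hKer g t x) ^ 2) =
      t ^ (2 * (α + k / 2 + 1)) / ((α + k / 2 + 1) * (2 * (α + k / 2 + 1) - 1)) *
        ∫ y in posOrthant k, g y * g (1 + y) := by
  have hβ1 : (-1:ℝ) < 2*α + k := by have := hg.alpha_lb; linarith
  have hβ0 : (2*α + (k:ℝ)) < 0 := by have := hg.alpha_ub; linarith
  set ν := volume.restrict (Set.Ioc (0:ℝ) t) with hν
  set Cs := ∫ z : Fin k → ℝ, g z * g (1 + z) with hCs
  set Ca := ∫ z : Fin k → ℝ, ‖g z * g (1 + z)‖ with hCa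
  set bigF : (ℝ × ℝ) × (Fin k → ℝ) → ℝ :=
    fun p => g (fun j => p.1.1 - p.2 j) * g (fun j => p.1.2 - p.2 j) with hbigF
  have measF : Measurable bigF :=
    (hg.measurable.comp (by fun_prop : Measurable
        (fun p : (ℝ × ℝ) × (Fin k → ℝ) => fun j => p.1.1 - p.2 j))).mul
      (hg.measurable.comp (by fun_prop : Measurable
        (fun p : (ℝ × ℝ) × (Fin k → ℝ) => fun j => p.1.2 - p.2 j)))
  have offdiag : ∀ᵐ p : ℝ × ℝ ∂(ν.prod ν), p.1 ≠ p.2 := diag_null ht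
  have bigInt : Integrable bigF ((ν.prod ν).prod volume) := by
    refine (integrable_prod_iff measF.aestronglyMeasurable).2 ⟨?_, ?_⟩
    · filter_upwards [offdiag] with p hp
      exact (lemB hg hp).1
    · refine ((W_integrable hβ1 hβ0 ht).mul_const Ca).congr ?_
      filter_upwards [offdiag] with p hp
      exact ((lemB hg hp).2.2).symm
  have ae_pair : ∀ᵐ x : Fin k → ℝ, Integrable (fun p : ℝ × ℝ => bigF (p, x)) (ν.prod ν) :=
    bigInt.swap.prod_right_ae
  have part1 : ∀ᵐ x : Fin k → ℝ,
      IntegrableOn (fun s => g (fun j => s - x j)) (Set.Ioc 0 t) volume := by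
    filter_upwards [ae_pair] with x hx
    set a : ℝ → ℝ := fun s => g (fun j => s - x j) with ha
    have ha_meas : Measurable a :=
      hg.measurable.comp (by fun_prop : Measurable (fun s : ℝ => fun j => s - x j))
    refine ⟨ha_meas.aestronglyMeasurable, ?_⟩
    have key : (∫⁻ s, (‖a s‖₊ : ENNReal) ∂ν) * (∫⁻ s, (‖a s‖₊ : ENNReal) ∂ν) < ⊤ := by
      have h2 : (∫⁻ p : ℝ × ℝ, (‖a p.1 * a p.2‖₊ : ENNReal) ∂(ν.prod ν)) < ⊤ := hx.2
      have hmul : ∀ p : ℝ × ℝ, (‖a p.1 * a p.2‖₊ : ENNReal) = (‖a p.1‖₊ : ENNReal) * ‖a p.2‖₊ := by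
        intro p; rw [nnnorm_mul, ENNReal.coe_mul]
      simp only [hmul] at h2
      have am : AEMeasurable (fun s : ℝ => (‖a s‖₊ : ENNReal)) ν :=
        (ha_meas.nnnorm.coe_nnreal_ennreal).aemeasurable
      rwa [lintegral_prod_mul am am] at h2
    by_contra hcon
    have htop : (∫⁻ s, (‖a s‖₊ : ENNReal) ∂ν) = ⊤ := by
      simpa [HasFiniteIntegral, lt_top_iff_ne_top, ← enorm_eq_nnnorm] using hcon
    rw [htop] at key
    simp at key
  have hKer_eq : ∀ x : Fin k → ℝ, (hKer g t x)^2 = ∫ p : ℝ × ℝ, bigF (p, x) ∂(ν.prod ν) := by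
    intro x
    have h := integral_prod_mul (μ := ν) (ν := ν)
      (fun s => g (fun j => s - x j)) (fun s => g (fun j => s - x j))
    rw [show (hKer g t x) = ∫ s, g (fun j => s - x j) ∂ν from rfl, sq]
    exact h.symm
  have hmeas_h : AEStronglyMeasurable (hKer g t) volume := by
    have hm : Measurable (fun q : (Fin k → ℝ) × ℝ => g (fun j => q.2 - q.1 j)) :=
      hg.measurable.comp (by fun_prop)
    have : StronglyMeasurable (fun x : Fin k → ℝ => ∫ s, g (fun j => s - x j) ∂ν) :=
      hm.stronglyMeasurable.integral_prod_right'
    exact this.aestronglyMeasurable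
  have hsq_int : Integrable (fun x : Fin k → ℝ => (hKer g t x)^2) volume := by
    have h := bigInt.integral_prod_right
    exact h.congr (Eventually.of_forall fun x => (hKer_eq x).symm)
  have part2 : MemLp (hKer g t) 2 volume := (memLp_two_iff_integrable_sq hmeas_h).2 hsq_int
  refine ⟨part1, part2, ?_⟩
  have swap_eq : ∫ x : Fin k → ℝ, ∫ p : ℝ × ℝ, bigF (p, x) ∂(ν.prod ν)
      = ∫ p : ℝ × ℝ, (∫ x : Fin k → ℝ, bigF (p, x)) ∂(ν.prod ν) := by
    have hunc : Integrable (Function.uncurry (fun p (x : Fin k → ℝ) => bigF (p, x)))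
        ((ν.prod ν).prod volume) := by
      refine bigInt.congr (Eventually.of_forall fun z => ?_)
      simp [Function.uncurry]
    exact (integral_integral_swap hunc).symm
  have step1 : (∫ x : Fin k → ℝ, (hKer g t x) ^ 2)
      = ∫ p : ℝ × ℝ, (∫ x : Fin k → ℝ, bigF (p, x)) ∂(ν.prod ν) := by
    rw [← swap_eq]
    exact integral_congr_ae (Eventually.of_forall fun x => hKer_eq x)
  have step2 : ∫ p : ℝ × ℝ, (∫ x : Fin k → ℝ, bigF (p, x)) ∂(ν.prod ν)
      = ∫ p : ℝ × ℝ, |p.2 - p.1| ^ (2*α + (k:ℝ)) * Cs ∂(ν.prod ν) := by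
    refine integral_congr_ae ?_
    filter_upwards [offdiag] with p hp
    exact (lemB hg hp).2.1
  have step3 : ∫ p : ℝ × ℝ, |p.2 - p.1| ^ (2*α + (k:ℝ)) * Cs ∂(ν.prod ν)
      = (2 * t ^ ((2*α + (k:ℝ)) + 2) / (((2*α + (k:ℝ)) + 1) * ((2*α + (k:ℝ)) + 2))) * Cs := by
    rw [integral_mul_const, W_value hβ1 hβ0 ht]
  have horth : ∫ y in posOrthant k, g y * g (1 + y) = Cs :=
    setIntegral_eq_integral_of_forall_compl_eq_zero
      (fun y hy => by rw [hg.zero_off y hy, zero_mul])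
  rw [step1, step2, step3, horth]
  have hexp : 2 * (α + (k:ℝ) / 2 + 1) = (2*α + (k:ℝ)) + 2 := by ring
  rw [hexp]
  have hb1 : (0:ℝ) < (2*α + (k:ℝ)) + 1 := by linarith
  have hb2 : (0:ℝ) < (2*α + (k:ℝ)) + 2 := by linarith
  have hc : α + (k:ℝ)/2 + 1 = ((2*α + (k:ℝ)) + 2)/2 := by ring
  rw [hc]
  rw [div_mul_eq_mul_div, div_mul_eq_mul_div,
    div_eq_div_iff (mul_pos hb1 hb2).ne'
      (mul_pos (half_pos hb2) (by linarith : (0:ℝ) < 2*α + (k:ℝ) + 2 - 1)).ne']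
  ring
end
end

section
/- Let g be a generalized Hermite kernel of order k with homogeneity exponent α (in particular g is not almost everywhere zero). Then C_g := ∫_{(0,∞)^k} g(x) g(1+x) dx is strictly positive. -/
open MeasureTheory Filter

noncomputable section

namespace GHK

lemma measurableSet_posOrthant (k : ℕ) : MeasurableSet (posOrthant k) := by
  have : posOrthant k = ⋂ j, {x : Fin k → ℝ | 0 < x j} := by
    ext x; simp [posOrthant, Set.mem_iInter]
  rw [this]
  exact MeasurableSet.iInter fun j =>
    measurableSet_lt measurable_const (measurable_pi_apply j)

variable {k : ℕ} {α : ℝ} {g : (Fin k → ℝ) → ℝ}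

/-- the kernel function `K x = g (1+x) * g x`. -/
def Kf (g : (Fin k → ℝ) → ℝ) : (Fin k → ℝ) → ℝ := fun x => g (1 + x) * g x

lemma Kf_zero_off (hg : IsGenHermiteKernel k α g) {x : Fin k → ℝ}
    (hx : x ∉ posOrthant k) : Kf g x = 0 := by
  simp [Kf, hg.zero_off x hx]

lemma Kf_integrable (hg : IsGenHermiteKernel k α g) : Integrable (Kf g) := by
  have h1 : Kf g = (posOrthant k).indicator (Kf g) := by
    ext x
    by_cases hx : x ∈ posOrthant k
    · rw [Set.indicator_of_mem hx]
    · rw [Set.indicator_of_notMem hx, Kf_zero_off hg hx]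
  rw [h1]
  rw [integrable_indicator_iff (measurableSet_posOrthant k)]
  have : IntegrableOn (fun x => g x * g (1 + x)) (posOrthant k) volume := hg.int_cond
  exact this.congr_fun (fun x _ => mul_comm _ _) (measurableSet_posOrthant k)

lemma goal_eq (hg : IsGenHermiteKernel k α g) :
    ∫ x in posOrthant k, g x * g (1 + x) = ∫ x, Kf g x := by
  have h1 : ∫ x in posOrthant k, g x * g (1 + x) = ∫ x in posOrthant k, Kf g x :=
    setIntegral_congr_fun (measurableSet_posOrthant k) (fun x _ => mul_comm _ _)
  have h2 : ∫ x, Kf g x = ∫ x in posOrthant k, Kf g x := by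
    rw [← integral_indicator (measurableSet_posOrthant k)]
    congr 1
    ext x
    by_cases hx : x ∈ posOrthant k
    · rw [Set.indicator_of_mem hx]
    · rw [Set.indicator_of_notMem hx, Kf_zero_off hg hx]
  rw [h1, h2]

lemma key_pointwise (hg : IsGenHermiteKernel k α g) {lam : ℝ} (hlam : 0 < lam)
    (x : Fin k → ℝ) :
    g (lam • (1 + x)) * g (lam • x) = lam ^ α * lam ^ α * Kf g x := by
  by_cases hx : x ∈ posOrthant k
  · have h1x : (1 : Fin k → ℝ) + x ∈ posOrthant k := by
      intro j
      have := hx j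
      simp only [Pi.add_apply, Pi.one_apply]
      linarith
    rw [hg.homog lam hlam _ h1x, hg.homog lam hlam _ hx, Kf]
    ring
  · have hx' : lam • x ∉ posOrthant k := by
      intro h
      exact hx (fun j => by
        have := h j
        simp only [Pi.smul_apply, smul_eq_mul] at this
        have h2 : 0 < lam⁻¹ * (lam * x j) := mul_pos (inv_pos.2 hlam) this
        rwa [inv_mul_cancel_left₀ hlam.ne'] at h2)
    rw [hg.zero_off _ hx', Kf_zero_off hg hx]
    ring

end GHK

namespace GHK

variable {k : ℕ} {α : ℝ} {g : (Fin k → ℝ) → ℝ}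

lemma lam_shift (hg : IsGenHermiteKernel k α g) {lam : ℝ} (hlam : 0 < lam) :
    Integrable (fun x => g (lam • 1 + x) * g x) ∧
    (∫ x, g (lam • 1 + x) * g x) = lam ^ α * lam ^ α * lam ^ (k : ℕ) * ∫ x, Kf g x ∧
    (∫ x, |g (lam • 1 + x) * g x|) = lam ^ α * lam ^ α * lam ^ (k : ℕ) * ∫ x, |Kf g x| := by
  set F : (Fin k → ℝ) → ℝ := fun x => g (lam • 1 + x) * g x with hF
  have hcomp : ∀ x, F (lam • x) = lam ^ α * lam ^ α * Kf g x := by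
    intro x
    have h1 : lam • (1 : Fin k → ℝ) + lam • x = lam • (1 + x) := (smul_add lam _ _).symm
    show g (lam • 1 + lam • x) * g (lam • x) = _
    rw [h1]
    exact key_pointwise hg hlam x
  have hKi := Kf_integrable hg
  have hInt1 : Integrable (fun x => F (lam • x)) := by
    have h2 : (fun x => F (lam • x)) = fun x => lam ^ α * lam ^ α * Kf g x := funext hcomp
    rw [h2]
    exact hKi.const_mul _
  have hIntF : Integrable F := (integrable_comp_smul_iff volume F (ne_of_gt hlam)).mp hInt1
  have habs : ∀ x, |F (lam • x)| = lam ^ α * lam ^ α * |Kf g x| := by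
    intro x
    rw [hcomp x, abs_mul, abs_of_nonneg (by positivity : (0:ℝ) ≤ lam ^ α * lam ^ α)]
  have hfr : Module.finrank ℝ (Fin k → ℝ) = k := Module.finrank_fin_fun ℝ
  have hlamk : (0:ℝ) < lam ^ (k:ℕ) := pow_pos hlam k
  have key : ∀ (G K' : (Fin k → ℝ) → ℝ) (c : ℝ),
      (∀ x, G (lam • x) = c * K' x) → (∫ x, G x) = lam ^ (k:ℕ) * c * ∫ x, K' x := by
    intro G K' c hc
    have hsc := Measure.integral_comp_smul (volume : Measure (Fin k → ℝ)) G lam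
    rw [hfr] at hsc
    have h3 : (∫ x, G (lam • x)) = c * ∫ x, K' x := by
      rw [funext hc]; exact integral_const_mul _ _
    rw [h3] at hsc
    have h4 : |(lam ^ (k:ℕ))⁻¹| = (lam ^ (k:ℕ))⁻¹ := abs_of_pos (by positivity)
    rw [h4, smul_eq_mul] at hsc
    have h6 := congrArg (fun z => lam ^ (k:ℕ) * z) hsc
    have h5 : lam ^ (k:ℕ) * ((lam ^ (k:ℕ))⁻¹ * ∫ x, G x) = ∫ x, G x := by
      rw [← mul_assoc, mul_inv_cancel₀ (ne_of_gt hlamk), one_mul]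
    rw [h5] at h6
    rw [← h6]; ring
  refine ⟨hIntF, ?_, ?_⟩
  · have := key F (Kf g) (lam ^ α * lam ^ α) hcomp
    rw [this]; ring
  · have := key (fun x => |F x|) (fun x => |Kf g x|) (lam ^ α * lam ^ α) habs
    rw [this]; ring

/-- the two-parameter section function -/
def secF (g : (Fin k → ℝ) → ℝ) (s u : ℝ) : (Fin k → ℝ) → ℝ :=
  fun x => g (s • 1 - x) * g (u • 1 - x)

lemma sec_lemma (hg : IsGenHermiteKernel k α g) {s u : ℝ} (hus : u < s) :
    Integrable (secF g s u) ∧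
    (∫ x, secF g s u x) = (s-u) ^ α * (s-u) ^ α * (s-u) ^ (k:ℕ) * ∫ x, Kf g x ∧
    (∫ x, |secF g s u x|) = (s-u) ^ α * (s-u) ^ α * (s-u) ^ (k:ℕ) * ∫ x, |Kf g x| := by
  have hlam : 0 < s - u := sub_pos.2 hus
  obtain ⟨hIntF, hval, habs⟩ := lam_shift hg hlam
  set F : (Fin k → ℝ) → ℝ := fun y => g ((s - u) • 1 + y) * g y with hFdef
  have hEq : ∀ x, secF g s u x = F (u • 1 - x) := by
    intro x
    show g (s • 1 - x) * g (u • 1 - x) = g ((s - u) • 1 + (u • 1 - x)) * g (u • 1 - x)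
    congr 2
    module
  constructor
  · have : Integrable (fun x => F (u • 1 - x)) := hIntF.comp_sub_left (u • (1 : Fin k → ℝ))
    exact this.congr (Filter.Eventually.of_forall fun x => (hEq x).symm)
  constructor
  · have e1 : (∫ x, secF g s u x) = ∫ x, F (u • 1 - x) := by rw [funext hEq]
    have e2 : (∫ x, F (u • 1 - x)) = ∫ x, F x := integral_sub_left_eq_self F volume (u • 1)
    rw [e1, e2]; exact hval
  · have e1 : (∫ x, |secF g s u x|) = ∫ x, |F (u • 1 - x)| := by
      congr 1
      funext x
      rw [hEq x]
    have e2 : (∫ x, |F (u • 1 - x)|) = ∫ x, |F x| :=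
      integral_sub_left_eq_self (fun y => |F y|) volume (u • 1)
    rw [e1, e2]; exact habs

lemma sec_lemma' (hg : IsGenHermiteKernel k α g) {s u : ℝ} (hsu : s ≠ u) :
    Integrable (secF g s u) ∧
    (∫ x, secF g s u x) = |s-u| ^ (α + α + (k:ℝ)) * ∫ x, Kf g x ∧
    (∫ x, |secF g s u x|) = |s-u| ^ (α + α + (k:ℝ)) * ∫ x, |Kf g x| := by
  have hbridge : ∀ lam : ℝ, 0 < lam →
      lam ^ (α + α + (k:ℝ)) = lam ^ α * lam ^ α * lam ^ (k:ℕ) := by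
    intro lam hlam
    rw [Real.rpow_add hlam, Real.rpow_add hlam, Real.rpow_natCast]
  rcases lt_or_gt_of_ne hsu with h | h
  · -- s < u
    have hcomm : secF g s u = secF g u s := by
      funext x; exact mul_comm _ _
    obtain ⟨h1, h2, h3⟩ := sec_lemma hg h
    have habs : |s - u| = u - s := by rw [abs_sub_comm]; exact abs_of_pos (sub_pos.2 h)
    refine ⟨hcomm ▸ h1, ?_, ?_⟩
    · rw [hcomm, h2, habs, hbridge _ (sub_pos.2 h)]
    · rw [hcomm, h3, habs, hbridge _ (sub_pos.2 h)]
  · obtain ⟨h1, h2, h3⟩ := sec_lemma hg h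
    have habs : |s - u| = s - u := abs_of_pos (sub_pos.2 h)
    refine ⟨h1, ?_, ?_⟩
    · rw [h2, habs, hbridge _ (sub_pos.2 h)]
    · rw [h3, habs, hbridge _ (sub_pos.2 h)]

end GHK

namespace GHK
open Set

lemma oneDim_rpow {a : ℝ} (ha : -1 < a) {t : ℝ} (ht : 0 < t)
    {s : ℝ} (hs : s ∈ Set.Ioc (0:ℝ) t) :
    IntegrableOn (fun u => |s - u| ^ a) (Set.Ioc (0:ℝ) t) ∧
    (∫ u in Set.Ioc (0:ℝ) t, |s - u| ^ a) ≤ 2 * t ^ (a+1) / (a+1) := by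
  have ha1 : 0 < a + 1 := by linarith
  have hs0 : 0 < s := hs.1
  have hst : s ≤ t := hs.2
  have hI1 : IntegrableOn (fun u => |s - u| ^ a) (Ioc 0 s) := by
    have ib : IntervalIntegrable (fun v : ℝ => v ^ a) volume 0 s :=
      intervalIntegral.intervalIntegrable_rpow' ha
    have ic := (ib.comp_sub_left s).symm
    simp only [sub_zero, sub_self] at ic
    have : IntegrableOn (fun u => (s - u) ^ a) (Ioc 0 s) :=
      (intervalIntegrable_iff_integrableOn_Ioc_of_le hs0.le).mp ic
    exact this.congr_fun (fun u hu => by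
      rw [abs_of_nonneg (by linarith [hu.2] : (0:ℝ) ≤ s - u)]) measurableSet_Ioc
  have hI2 : IntegrableOn (fun u => |s - u| ^ a) (Ioc s t) := by
    have ib : IntervalIntegrable (fun v : ℝ => v ^ a) volume 0 (t - s) :=
      intervalIntegral.intervalIntegrable_rpow' ha
    have ic := ib.comp_sub_right s
    simp only [zero_add, sub_add_cancel] at ic
    have : IntegrableOn (fun u => (u - s) ^ a) (Ioc s t) :=
      (intervalIntegrable_iff_integrableOn_Ioc_of_le hst).mp ic
    exact this.congr_fun (fun u hu => by
      rw [abs_sub_comm, abs_of_nonneg (by linarith [hu.1] : (0:ℝ) ≤ u - s)]) measurableSet_Ioc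
  have hunion : Ioc (0:ℝ) s ∪ Ioc s t = Ioc 0 t := Set.Ioc_union_Ioc_eq_Ioc hs0.le hst
  have hInt : IntegrableOn (fun u => |s - u| ^ a) (Ioc 0 t) := by
    rw [← hunion]; exact hI1.union hI2
  refine ⟨hInt, ?_⟩
  have hdisj : Disjoint (Ioc (0:ℝ) s) (Ioc s t) := Set.Ioc_disjoint_Ioc_of_le le_rfl
  have hsplit : (∫ u in Ioc (0:ℝ) t, |s - u| ^ a)
      = (∫ u in Ioc (0:ℝ) s, |s - u| ^ a) + ∫ u in Ioc s t, |s - u| ^ a := by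
    rw [← hunion]
    exact setIntegral_union hdisj measurableSet_Ioc hI1 hI2
  have hv1 : (∫ u in Ioc (0:ℝ) s, |s - u| ^ a) = s ^ (a+1) / (a+1) := by
    have e0 : (∫ u in Ioc (0:ℝ) s, |s - u| ^ a) = ∫ u in Ioc (0:ℝ) s, (s - u) ^ a :=
      setIntegral_congr_fun measurableSet_Ioc (fun u hu => by
        rw [abs_of_nonneg (by linarith [hu.2] : (0:ℝ) ≤ s - u)])
    rw [e0, ← intervalIntegral.integral_of_le hs0.le,
      intervalIntegral.integral_comp_sub_left (fun v => v ^ a) s]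
    simp only [sub_self, sub_zero]
    rw [integral_rpow (Or.inl ha), Real.zero_rpow (ne_of_gt ha1), sub_zero]
  have hv2 : (∫ u in Ioc s t, |s - u| ^ a) = (t - s) ^ (a+1) / (a+1) := by
    have e0 : (∫ u in Ioc s t, |s - u| ^ a) = ∫ u in Ioc s t, (u - s) ^ a :=
      setIntegral_congr_fun measurableSet_Ioc (fun u hu => by
        rw [abs_sub_comm, abs_of_nonneg (by linarith [hu.1] : (0:ℝ) ≤ u - s)])
    rw [e0, ← intervalIntegral.integral_of_le hst,
      intervalIntegral.integral_comp_sub_right (fun v => v ^ a) s]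
    simp only [sub_self, zero_sub]
    rw [integral_rpow (Or.inl ha), Real.zero_rpow (ne_of_gt ha1), sub_zero]
  rw [hsplit, hv1, hv2]
  have b1 : s ^ (a+1) ≤ t ^ (a+1) := Real.rpow_le_rpow hs0.le hst ha1.le
  have b2 : (t - s) ^ (a+1) ≤ t ^ (a+1) :=
    Real.rpow_le_rpow (by linarith) (by linarith) ha1.le
  have c1 : s ^ (a+1) / (a+1) ≤ t ^ (a+1) / (a+1) := (div_le_div_iff_of_pos_right ha1).mpr b1
  have c2 : (t - s) ^ (a+1) / (a+1) ≤ t ^ (a+1) / (a+1) := (div_le_div_iff_of_pos_right ha1).mpr b2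
  have : 2 * t ^ (a+1) / (a+1) = t ^ (a+1) / (a+1) + t ^ (a+1) / (a+1) := by ring
  rw [this]
  linarith

lemma W_measurable (a : ℝ) : Measurable (fun p : ℝ × ℝ => |p.1 - p.2| ^ a) :=
  Measurable.pow ((measurable_fst.sub measurable_snd).abs) measurable_const

lemma W_int {a : ℝ} (ha : -1 < a) {t : ℝ} (ht : 0 < t) :
    Integrable (fun p : ℝ × ℝ => |p.1 - p.2| ^ a)
      ((volume.restrict (Set.Ioc 0 t)).prod (volume.restrict (Set.Ioc 0 t))) := by
  set μt := volume.restrict (Set.Ioc (0:ℝ) t) with hμt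
  have hWm : AEStronglyMeasurable (fun p : ℝ × ℝ => |p.1 - p.2| ^ a) (μt.prod μt) :=
    (W_measurable a).aestronglyMeasurable
  rw [integrable_prod_iff hWm]
  constructor
  · filter_upwards [ae_restrict_mem measurableSet_Ioc] with s hs
    exact (oneDim_rpow ha ht hs).1
  · have hb : ∀ᵐ s ∂μt, ‖∫ u, ‖|s - u| ^ a‖ ∂μt‖ ≤ 2 * t ^ (a+1) / (a+1) := by
      filter_upwards [ae_restrict_mem measurableSet_Ioc] with s hs
      have e1 : (∫ u, ‖|s - u| ^ a‖ ∂μt) = ∫ u in Set.Ioc (0:ℝ) t, |s - u| ^ a := by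
        congr 1
        funext u
        exact Real.norm_of_nonneg (Real.rpow_nonneg (abs_nonneg _) a)
      rw [e1, Real.norm_of_nonneg (setIntegral_nonneg measurableSet_Ioc
        (fun u _ => Real.rpow_nonneg (abs_nonneg _) a))]
      exact (oneDim_rpow ha ht hs).2
    have hconst : Integrable (fun _ : ℝ => 2 * t ^ (a+1) / (a+1)) μt := by
      rw [hμt]
      exact integrableOn_const measure_Ioc_lt_top.ne
    exact Integrable.mono' hconst (hWm.norm.integral_prod_right') hb

lemma diag_null {t : ℝ} :
    ((volume.restrict (Set.Ioc (0:ℝ) t)).prod (volume.restrict (Set.Ioc (0:ℝ) t)))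
      {p : ℝ × ℝ | p.1 = p.2} = 0 := by
  set μt := volume.restrict (Set.Ioc (0:ℝ) t)
  have hD : MeasurableSet {p : ℝ × ℝ | p.1 = p.2} :=
    (isClosed_eq continuous_fst continuous_snd).measurableSet
  rw [Measure.prod_apply hD]
  have : ∀ s : ℝ, μt (Prod.mk s ⁻¹' {p : ℝ × ℝ | p.1 = p.2}) = 0 := by
    intro s
    have e1 : Prod.mk s ⁻¹' {p : ℝ × ℝ | p.1 = p.2} = {s} := by
      ext u; simp [eq_comm]
    rw [e1]
    exact le_antisymm (le_trans (Measure.restrict_le_self _) (by simp)) zero_le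
  simp only [this]
  exact lintegral_zero

lemma W_pos {a : ℝ} (ha : -1 < a) (ha0 : a < 0) {t : ℝ} (ht : 0 < t) :
    0 < ∫ p : ℝ × ℝ, |p.1 - p.2| ^ a
      ∂((volume.restrict (Set.Ioc 0 t)).prod (volume.restrict (Set.Ioc 0 t))) := by
  set μt := volume.restrict (Set.Ioc (0:ℝ) t) with hμt
  rw [integral_pos_iff_support_of_nonneg
    (fun p => Real.rpow_nonneg (abs_nonneg _) a) (W_int ha ht)]
  have hsub : {p : ℝ × ℝ | p.1 = p.2}ᶜ ⊆ Function.support (fun p : ℝ × ℝ => |p.1 - p.2| ^ a) := by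
    intro p hp
    have : p.1 ≠ p.2 := hp
    have habs : 0 < |p.1 - p.2| := abs_pos.mpr (sub_ne_zero.mpr this)
    exact (Real.rpow_pos_of_pos habs a).ne'
  have huniv : (μt.prod μt) Set.univ = ENNReal.ofReal t * ENNReal.ofReal t := by
    rw [← Set.univ_prod_univ, Measure.prod_prod]
    simp [hμt, Real.volume_Ioc, ht]
  have hne : (μt.prod μt) Set.univ ≠ 0 := by
    rw [huniv]
    simp [ENNReal.ofReal_eq_zero, not_le, ht]
  have hcompl : 0 < (μt.prod μt) {p : ℝ × ℝ | p.1 = p.2}ᶜ := by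
    by_contra h
    push_neg at h
    have h0 : (μt.prod μt) {p : ℝ × ℝ | p.1 = p.2}ᶜ = 0 := le_antisymm h zero_le
    have : (μt.prod μt) Set.univ ≤ (μt.prod μt) {p : ℝ × ℝ | p.1 = p.2}
        + (μt.prod μt) {p : ℝ × ℝ | p.1 = p.2}ᶜ := by
      rw [← Set.union_compl_self {p : ℝ × ℝ | p.1 = p.2}] ; exact measure_union_le _ _
    rw [diag_null, h0, add_zero] at this
    exact hne (le_antisymm this zero_le)
  exact lt_of_lt_of_le hcompl (measure_mono hsub)

end GHK

namespace GHK
open Set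

variable {k : ℕ} {α : ℝ} {g : (Fin k → ℝ) → ℝ}

/-- the big kernel on `(ℝ × ℝ) × ℝ^k`. -/
def Phi (g : (Fin k → ℝ) → ℝ) : (ℝ × ℝ) × (Fin k → ℝ) → ℝ :=
  fun p => g (p.1.1 • 1 - p.2) * g (p.1.2 • 1 - p.2)

lemma Phi_measurable (hg : IsGenHermiteKernel k α g) : Measurable (Phi g) := by
  have h1 : Measurable fun p : (ℝ × ℝ) × (Fin k → ℝ) => p.1.1 • (1 : Fin k → ℝ) - p.2 :=
    (measurable_fst.fst.smul measurable_const).sub measurable_snd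
  have h2 : Measurable fun p : (ℝ × ℝ) × (Fin k → ℝ) => p.1.2 • (1 : Fin k → ℝ) - p.2 :=
    (measurable_fst.snd.smul measurable_const).sub measurable_snd
  exact (hg.measurable.comp h1).mul (hg.measurable.comp h2)

lemma aEx_bounds (hg : IsGenHermiteKernel k α g) :
    -1 < α + α + (k:ℝ) ∧ α + α + (k:ℝ) < 0 := by
  have h1 := hg.alpha_lb
  have h2 := hg.alpha_ub
  constructor
  · have : -((k:ℝ) + 1) / 2 < α := h1
    linarith
  · have : α < -(k:ℝ) / 2 := h2
    linarith

lemma off_diag_ae {t : ℝ} :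
    ∀ᵐ p ∂((volume.restrict (Set.Ioc (0:ℝ) t)).prod (volume.restrict (Set.Ioc (0:ℝ) t))),
      p.1 ≠ p.2 := by
  rw [ae_iff]
  have : {p : ℝ × ℝ | ¬ p.1 ≠ p.2} = {p : ℝ × ℝ | p.1 = p.2} := by
    ext p; simp
  rw [this]
  exact diag_null

lemma Phi_integrable (hg : IsGenHermiteKernel k α g) {t : ℝ} (ht : 0 < t) :
    Integrable (Phi g)
      (((volume.restrict (Set.Ioc (0:ℝ) t)).prod (volume.restrict (Set.Ioc (0:ℝ) t))).prod
        volume) := by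
  set μt := volume.restrict (Set.Ioc (0:ℝ) t) with hμt
  have hPm : AEStronglyMeasurable (Phi g) ((μt.prod μt).prod volume) :=
    (Phi_measurable hg).aestronglyMeasurable
  rw [integrable_prod_iff hPm]
  constructor
  · filter_upwards [off_diag_ae] with p hp
    exact (sec_lemma' hg hp).1
  · have hcongr : ∀ᵐ p ∂(μt.prod μt),
        |p.1 - p.2| ^ (α + α + (k:ℝ)) * (∫ x, |Kf g x|)
          = (∫ x, ‖Phi g (p, x)‖) := by
      filter_upwards [off_diag_ae] with p hp
      have h3 := (sec_lemma' hg hp).2.2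
      have : (∫ x, ‖Phi g (p, x)‖) = ∫ x, |secF g p.1 p.2 x| := by
        simp only [Real.norm_eq_abs]
        rfl
      rw [this]
      exact h3.symm
    exact Integrable.congr ((W_int (aEx_bounds hg).1 ht).mul_const _) hcongr

lemma h_sq_integrable (hg : IsGenHermiteKernel k α g) {t : ℝ} (ht : 0 < t) :
    Integrable (fun x => (∫ s in Set.Ioc (0:ℝ) t, g (s • 1 - x)) ^ 2) volume := by
  have h1 := (Phi_integrable hg ht).integral_prod_right
  refine h1.congr (Filter.Eventually.of_forall fun x => ?_)
  have h2 : (∫ p : ℝ × ℝ, Phi g (p, x)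
        ∂((volume.restrict (Set.Ioc (0:ℝ) t)).prod (volume.restrict (Set.Ioc (0:ℝ) t))))
      = (∫ s in Set.Ioc (0:ℝ) t, g (s • 1 - x)) * ∫ s in Set.Ioc (0:ℝ) t, g (s • 1 - x) :=
    integral_prod_mul (fun s => g (s • 1 - x)) (fun s => g (s • 1 - x))
  exact h2.trans (pow_two _).symm

lemma key_identity (hg : IsGenHermiteKernel k α g) {t : ℝ} (ht : 0 < t) :
    (∫ p : ℝ × ℝ, |p.1 - p.2| ^ (α + α + (k:ℝ))
        ∂((volume.restrict (Set.Ioc (0:ℝ) t)).prod (volume.restrict (Set.Ioc (0:ℝ) t))))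
      * (∫ x, Kf g x)
      = ∫ x, (∫ s in Set.Ioc (0:ℝ) t, g (s • 1 - x)) ^ 2 := by
  set μt := volume.restrict (Set.Ioc (0:ℝ) t) with hμt
  have hInt := Phi_integrable hg ht
  have h1 := integral_prod (Phi g) hInt
  have h2 := integral_prod_symm (Phi g) hInt
  have e1 : (∫ p : ℝ × ℝ, (∫ x, Phi g (p, x)) ∂(μt.prod μt))
      = ∫ p : ℝ × ℝ, |p.1 - p.2| ^ (α + α + (k:ℝ)) * (∫ x, Kf g x) ∂(μt.prod μt) := by
    refine integral_congr_ae ?_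
    filter_upwards [off_diag_ae] with p hp
    exact (sec_lemma' hg hp).2.1
  have e2 : (∫ p : ℝ × ℝ, |p.1 - p.2| ^ (α + α + (k:ℝ)) * (∫ x, Kf g x) ∂(μt.prod μt))
      = (∫ p : ℝ × ℝ, |p.1 - p.2| ^ (α + α + (k:ℝ)) ∂(μt.prod μt)) * ∫ x, Kf g x :=
    integral_mul_const _ _
  have e3 : (∫ x, (∫ p : ℝ × ℝ, Phi g (p, x) ∂(μt.prod μt)))
      = ∫ x, (∫ s in Set.Ioc (0:ℝ) t, g (s • 1 - x)) ^ 2 := by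
    congr 1
    funext x
    have h3 : (∫ p : ℝ × ℝ, Phi g (p, x) ∂(μt.prod μt))
        = (∫ s, g (s • 1 - x) ∂μt) * ∫ s, g (s • 1 - x) ∂μt :=
      integral_prod_mul (fun s => g (s • 1 - x)) (fun s => g (s • 1 - x))
    rw [h3]
    ring
  rw [← e2, ← e1, ← h1, h2, e3]

end GHK

namespace GHK
open Set intervalIntegral

lemma oneD {f : ℝ → ℝ} (hi : IntegrableOn f (Set.Ioc (0:ℝ) 1))
    (hq : ∀ q : ℚ, 0 < (q:ℝ) → (q:ℝ) ≤ 1 → (∫ s in Set.Ioc (0:ℝ) (q:ℝ), f s) = 0) :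
    ∀ᵐ s ∂(volume.restrict (Set.Ioc (0:ℝ) 1)), f s = 0 := by
  set f' : ℝ → ℝ := (Set.Ioc (0:ℝ) 1).indicator f with hf'
  have hf'i : Integrable f' volume := (integrable_indicator_iff measurableSet_Ioc).2 hi
  set F : ℝ → ℝ := fun t => ∫ s in (0:ℝ)..t, f' s with hFdef
  have hFc : Continuous F := hf'i.continuous_primitive 0
  have hFq : ∀ q : ℚ, 0 < (q:ℝ) → (q:ℝ) ≤ 1 → F (q:ℝ) = 0 := by
    intro q h0 h1
    have e1 : F (q:ℝ) = ∫ s in Set.Ioc (0:ℝ) (q:ℝ), f' s :=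
      intervalIntegral.integral_of_le (le_of_lt h0)
    have e2 : (∫ s in Set.Ioc (0:ℝ) (q:ℝ), f' s) = ∫ s in Set.Ioc (0:ℝ) (q:ℝ), f s :=
      setIntegral_congr_fun measurableSet_Ioc (fun s hs => by
        rw [hf']
        exact Set.indicator_of_mem (Set.mem_Ioc.mpr ⟨hs.1, le_trans hs.2 h1⟩) f)
    rw [e1, e2]
    exact hq q h0 h1
  have hF01 : ∀ t ∈ Set.Ioc (0:ℝ) 1, F t = 0 := by
    intro t ht
    have hseq : ∀ n : ℕ, ∃ q : ℚ, max (t - 1/(n+1)) (t/2) < (q:ℝ) ∧ (q:ℝ) < t := by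
      intro n
      have hmax : max (t - 1/(n+1)) (t/2) < t := by
        apply max_lt
        · have : (0:ℝ) < 1/(n+1) := by positivity
          linarith
        · linarith [ht.1]
      exact exists_rat_btwn hmax
    choose q hq1 hq2 using hseq
    have hq0 : ∀ n, 0 < ((q n):ℝ) := by
      intro n
      have : t/2 ≤ max (t - 1/(n+1)) (t/2) := le_max_right _ _
      have h2 : (0:ℝ) < t/2 := by linarith [ht.1]
      linarith [hq1 n]
    have hql : ∀ n, ((q n):ℝ) ≤ 1 := fun n => le_of_lt (lt_of_lt_of_le (hq2 n) ht.2)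
    have htend : Filter.Tendsto (fun n : ℕ => ((q n):ℝ)) Filter.atTop (nhds t) := by
      have hlow : Filter.Tendsto (fun n : ℕ => t - 1/(n+1:ℝ)) Filter.atTop (nhds t) := by
        have h3 : Filter.Tendsto (fun n : ℕ => 1/(n+1:ℝ)) Filter.atTop (nhds 0) :=
          tendsto_one_div_add_atTop_nhds_zero_nat
        have h4 := Filter.Tendsto.const_sub t h3
        simpa using h4
      apply tendsto_of_tendsto_of_tendsto_of_le_of_le hlow tendsto_const_nhds
      · intro n
        exact le_trans (le_max_left _ _) (le_of_lt (hq1 n))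
      · exact fun n => (hq2 n).le
    have hcomp : Filter.Tendsto (fun n => F ((q n):ℝ)) Filter.atTop (nhds (F t)) :=
      (hFc.tendsto t).comp htend
    have hzero : (fun n => F ((q n):ℝ)) = fun _ => (0:ℝ) :=
      funext fun n => hFq (q n) (hq0 n) (hql n)
    rw [hzero] at hcomp
    exact tendsto_nhds_unique hcomp tendsto_const_nhds
  have hII : ∀ a b : ℝ, IntervalIntegrable f' volume a b := fun a b =>
    hf'i.intervalIntegrable
  have hFall : ∀ t : ℝ, F t = 0 := by
    have hoff : ∀ a b : ℝ, a ≤ b → (∀ s ∈ Set.Ioc a b, s ∉ Set.Ioc (0:ℝ) 1) →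
        (∫ s in a..b, f' s) = 0 := by
      intro a b h hab
      rw [intervalIntegral.integral_of_le h]
      apply setIntegral_eq_zero_of_forall_eq_zero
      intro s hs
      rw [hf', Set.indicator_of_notMem (hab s hs)]
    intro t
    rcases le_or_gt t 0 with h | h
    · have e1 : F t = - ∫ s in t..0, f' s := intervalIntegral.integral_symm t 0
      rw [e1, hoff t 0 h (fun s hs h2 => absurd h2.1 (not_lt.mpr hs.2))]
      ring
    · rcases le_or_gt t 1 with h1 | h1
      · exact hF01 t ⟨h, h1⟩
      · have hadd := intervalIntegral.integral_add_adjacent_intervals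
          (hII 0 1) (hII 1 t)
        have h2 : (∫ s in (1:ℝ)..t, f' s) = 0 :=
          hoff 1 t h1.le (fun s hs h3 => absurd h3.2 (not_le.mpr hs.1))
        have h3 : F 1 = 0 := hF01 1 ⟨zero_lt_one, le_refl 1⟩
        have e2 : F t = F 1 + ∫ s in (1:ℝ)..t, f' s := hadd.symm
        rw [e2, h2, h3, add_zero]
  have havg : ∀ x r : ℝ, 0 < r → (∫ y in Metric.closedBall x r, f' y) = 0 := by
    intro x r hr
    rw [Real.closedBall_eq_Icc, integral_Icc_eq_integral_Ioc,
      ← intervalIntegral.integral_of_le (by linarith : x - r ≤ x + r)]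
    have hsub := intervalIntegral.integral_interval_sub_left
      (hII 0 (x+r)) (hII 0 (x-r))
    rw [← hsub]
    have e1 : (∫ s in (0:ℝ)..(x+r), f' s) = F (x+r) := rfl
    have e2 : (∫ s in (0:ℝ)..(x-r), f' s) = F (x-r) := rfl
    rw [e1, e2, hFall, hFall, sub_zero]
  have hloc : LocallyIntegrable f' volume := hf'i.locallyIntegrable
  have hld := IsUnifLocDoublingMeasure.ae_tendsto_average (μ := (volume : Measure ℝ)) hloc 1
  have hf'0 : ∀ᵐ x ∂(volume : Measure ℝ), f' x = 0 := by
    filter_upwards [hld] with x hx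
    have h1 : Filter.Tendsto (fun r : ℝ => ⨍ y in Metric.closedBall x r, f' y)
        (nhdsWithin 0 (Set.Ioi 0)) (nhds (f' x)) := by
      apply hx (fun _ => x) id Filter.tendsto_id
      filter_upwards [self_mem_nhdsWithin] with r hr
      have : (0:ℝ) < r := hr
      simp [Metric.mem_closedBall]
      positivity
    have h2 : Filter.Tendsto (fun r : ℝ => ⨍ y in Metric.closedBall x r, f' y)
        (nhdsWithin 0 (Set.Ioi 0)) (nhds 0) := by
      apply Filter.Tendsto.congr' _ (tendsto_const_nhds (α := ℝ))
      filter_upwards [self_mem_nhdsWithin] with r hr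
      have hr0 : (0:ℝ) < r := hr
      rw [setAverage_eq, havg x r hr0, smul_zero]
    exact (tendsto_nhds_unique h1 h2)
  filter_upwards [ae_restrict_of_ae hf'0, ae_restrict_mem measurableSet_Ioc] with s h1 h2
  rw [hf', Set.indicator_of_mem h2] at h1
  exact h1

end GHK

namespace GHK
open Set

variable {k : ℕ} {α : ℝ} {g : (Fin k → ℝ) → ℝ}

lemma phi_measurable (hg : IsGenHermiteKernel k α g) (x : Fin k → ℝ) :
    Measurable (fun s : ℝ => g (s • 1 - x)) :=
  hg.measurable.comp ((measurable_id.smul measurable_const).sub measurable_const)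

lemma ae_integrableOn (hg : IsGenHermiteKernel k α g) :
    ∀ᵐ x ∂(volume : Measure (Fin k → ℝ)),
      IntegrableOn (fun s => g (s • 1 - x)) (Set.Ioc (0:ℝ) 1) := by
  have h1 := (Phi_integrable hg one_pos).prod_left_ae
  filter_upwards [h1] with x hx
  set μ1 := volume.restrict (Set.Ioc (0:ℝ) 1)
  have hφm : AEStronglyMeasurable (fun s => g (s • 1 - x)) μ1 :=
    (phi_measurable hg x).aestronglyMeasurable
  refine ⟨hφm, ?_⟩
  have h2 : (∫⁻ p, ‖Phi g (p, x)‖₊ ∂(μ1.prod μ1)) < ⊤ := hx.2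
  show (∫⁻ s, ‖g (s • 1 - x)‖₊ ∂μ1) < ⊤
  have h3 : ∀ p : ℝ × ℝ, (‖Phi g (p, x)‖₊ : ENNReal)
      = (‖g (p.1 • 1 - x)‖₊ : ENNReal) * (‖g (p.2 • 1 - x)‖₊ : ENNReal) := by
    intro p
    rw [← ENNReal.coe_mul, ← nnnorm_mul]
    rfl
  have h4 : (∫⁻ p, ‖Phi g (p, x)‖₊ ∂(μ1.prod μ1))
      = (∫⁻ s, ‖g (s • 1 - x)‖₊ ∂μ1) * ∫⁻ s, ‖g (s • 1 - x)‖₊ ∂μ1 := by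
    rw [funext h3]
    exact lintegral_prod_mul hφm.aemeasurable.nnnorm.coe_nnreal_ennreal hφm.aemeasurable.nnnorm.coe_nnreal_ennreal
  rw [h4] at h2
  by_contra hcon
  push_neg at hcon
  have htop : (∫⁻ s, ‖g (s • 1 - x)‖₊ ∂μ1) = ⊤ := top_le_iff.mp hcon
  rw [htop, ENNReal.top_mul_top] at h2
  exact absurd h2 (lt_irrefl _)

theorem stmt3' (hk : 1 ≤ k) (hg : IsGenHermiteKernel k α g) :
    0 < ∫ x in posOrthant k, g x * g (1 + x) := by
  rw [goal_eq hg]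
  set C0 := ∫ x, Kf g x with hC0
  obtain ⟨ha1, ha0⟩ := aEx_bounds hg
  -- nonnegativity
  have hW1 := W_pos ha1 ha0 (zero_lt_one (α := ℝ))
  have hkey1 := key_identity hg (zero_lt_one (α := ℝ))
  have hsqnn : (0:ℝ) ≤ ∫ x, (∫ s in Set.Ioc (0:ℝ) 1, g (s • 1 - x)) ^ 2 :=
    integral_nonneg fun x => sq_nonneg _
  have hC0nn : 0 ≤ C0 := by nlinarith [hkey1, hW1, hsqnn]
  rcases lt_or_eq_of_le hC0nn with h | h
  · exact h
  exfalso
  have hC00 : C0 = 0 := h.symm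
  -- vanishing of h_t for rational t
  have hvanish : ∀ q : ℚ, 0 < (q:ℝ) → (q:ℝ) ≤ 1 →
      ∀ᵐ x ∂(volume : Measure (Fin k → ℝ)),
        (∫ s in Set.Ioc (0:ℝ) (q:ℝ), g (s • 1 - x)) = 0 := by
    intro q h0 h1
    have hkeyq := key_identity hg h0
    rw [← hC0, hC00, mul_zero] at hkeyq
    have hint := h_sq_integrable hg h0
    have hzero := (integral_eq_zero_iff_of_nonneg (fun x => sq_nonneg _) hint).mp hkeyq.symm
    filter_upwards [hzero] with x hx
    have hx' : (∫ s in Set.Ioc (0:ℝ) (q:ℝ), g (s • 1 - x)) ^ 2 = 0 := by simpa using hx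
    exact sq_eq_zero_iff.mp hx'
  have hall : ∀ᵐ x ∂(volume : Measure (Fin k → ℝ)),
      ∀ q : ℚ, 0 < (q:ℝ) → (q:ℝ) ≤ 1 →
        (∫ s in Set.Ioc (0:ℝ) (q:ℝ), g (s • 1 - x)) = 0 := by
    rw [MeasureTheory.ae_all_iff]
    intro q
    by_cases h0 : 0 < (q:ℝ)
    · by_cases h1 : (q:ℝ) ≤ 1
      · filter_upwards [hvanish q h0 h1] with x hx _ _
        exact hx
      · exact Filter.Eventually.of_forall fun x _ hh => absurd hh h1
    · exact Filter.Eventually.of_forall fun x hh => absurd hh h0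
  have hae : ∀ᵐ x ∂(volume : Measure (Fin k → ℝ)),
      ∀ᵐ s ∂(volume.restrict (Set.Ioc (0:ℝ) 1)), g (s • 1 - x) = 0 := by
    filter_upwards [hall, ae_integrableOn hg] with x hx hix
    exact oneD hix hx
  -- transfer to a single s
  set S : Set ((Fin k → ℝ) × ℝ) := {z | g (z.2 • 1 - z.1) = 0} with hSdef
  have hS : MeasurableSet S := by
    have hm : Measurable fun z : (Fin k → ℝ) × ℝ => g (z.2 • 1 - z.1) :=
      hg.measurable.comp ((measurable_snd.smul measurable_const).sub measurable_fst)
    exact hm (measurableSet_singleton 0)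
  set μ1 := volume.restrict (Set.Ioc (0:ℝ) 1) with hμ1
  have hprod : ∀ᵐ z ∂((volume : Measure (Fin k → ℝ)).prod μ1), z ∈ S :=
    (Measure.ae_prod_mem_iff_ae_ae_mem hS).mpr hae
  have hmap : Measure.map Prod.swap (μ1.prod (volume : Measure (Fin k → ℝ)))
      = (volume : Measure (Fin k → ℝ)).prod μ1 := Measure.prod_swap
  rw [← hmap] at hprod
  have hswap : ∀ᵐ w ∂(μ1.prod (volume : Measure (Fin k → ℝ))), Prod.swap w ∈ S :=
    (ae_map_iff measurable_swap.aemeasurable hS).mp hprod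
  have hsx := Measure.ae_ae_of_ae_prod hswap
  have hne : μ1 ≠ 0 := by
    intro hcon
    have : μ1 Set.univ = 0 := by rw [hcon]; rfl
    rw [hμ1, Measure.restrict_apply_univ, Real.volume_Ioc] at this
    simp at this
  have : (ae μ1).NeBot := ae_neBot.mpr hne
  obtain ⟨s, hs⟩ := hsx.exists
  -- hs : ∀ᵐ x ∂volume, (x, s) ∈ S, i.e. g (s • 1 - x) = 0
  have hT : MeasurePreserving (fun x : Fin k → ℝ => s • 1 - x) volume volume :=
    Measure.measurePreserving_sub_left volume (s • 1)
  have hN : MeasurableSet {y : Fin k → ℝ | g y ≠ 0} := by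
    have := hg.measurable (measurableSet_singleton 0)
    exact this.compl
  have hnull : volume {y : Fin k → ℝ | g y ≠ 0} = 0 := by
    have e1 : volume ((fun x : Fin k → ℝ => s • 1 - x) ⁻¹' {y | g y ≠ 0})
        = volume {y : Fin k → ℝ | g y ≠ 0} := hT.measure_preimage hN.nullMeasurableSet
    rw [← e1]
    have e2 : (fun x : Fin k → ℝ => s • 1 - x) ⁻¹' {y | g y ≠ 0}
        = {x | g (s • 1 - x) ≠ 0} := rfl
    rw [e2]
    have hs' : ∀ᵐ x ∂(volume : Measure (Fin k → ℝ)), g (s • 1 - x) = 0 := hs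
    exact ae_iff.mp hs'
  have hgz : ∀ᵐ y ∂(volume : Measure (Fin k → ℝ)), g y = 0 := by
    rw [ae_iff]
    exact hnull
  exact hg.nonzero (ae_restrict_of_ae hgz)

end GHK


theorem stmt3 {k : ℕ} (hk : 1 ≤ k) {α : ℝ} {g : (Fin k → ℝ) → ℝ}
    (hg : IsGenHermiteKernel k α g) :
    0 < ∫ x in posOrthant k, g x * g (1 + x) := by
  exact GHK.stmt3' hk hg
end
end

section
/- Let g₁ be a generalized Hermite kernel of order k₁ with homogeneity exponent α₁ and g₂ a generalized Hermite kernel of order k₂ with homogeneity exponent α₂, and suppose α₁ + α₂ > −(k₁ + k₂ + 1)/2. Then the tensor product (g₁ ⊗ g₂)(x, y) := g₁(x) g₂(y), for x ∈ (0,∞)^{k₁}, y ∈ (0,∞)^{k₂}, is a generalized Hermite kernel of order k₁ + k₂ with homogeneity exponent α₁ + α₂. -/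
open MeasureTheory Filter

noncomputable section

def prodE (k₁ k₂ : ℕ) : ((Fin k₁ → ℝ) × (Fin k₂ → ℝ)) ≃ᵐ (Fin (k₁+k₂) → ℝ) :=
  (MeasurableEquiv.sumPiEquivProdPi (fun _ : Fin k₁ ⊕ Fin k₂ => ℝ)).symm.trans
    (MeasurableEquiv.piCongrLeft (fun _ => ℝ) finSumFinEquiv)

lemma prodE_castAdd {k₁ k₂ : ℕ} (x : Fin k₁ → ℝ) (y : Fin k₂ → ℝ) (j : Fin k₁) :
    prodE k₁ k₂ (x, y) (Fin.castAdd k₂ j) = x j := by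
  have := Equiv.piCongrLeft_sumInl (fun _ : Fin (k₁+k₂) => ℝ) finSumFinEquiv x y j
  rw [finSumFinEquiv_apply_left] at this
  exact this

lemma prodE_natAdd {k₁ k₂ : ℕ} (x : Fin k₁ → ℝ) (y : Fin k₂ → ℝ) (j : Fin k₂) :
    prodE k₁ k₂ (x, y) (Fin.natAdd k₁ j) = y j := by
  have := Equiv.piCongrLeft_sumInr (fun _ : Fin (k₁+k₂) => ℝ) finSumFinEquiv x y j
  rw [finSumFinEquiv_apply_right] at this
  exact this

lemma prodE_mp (k₁ k₂ : ℕ) : MeasurePreserving (prodE k₁ k₂) volume volume :=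
  (MeasureTheory.volume_measurePreserving_piCongrLeft
      (fun _ : Fin (k₁+k₂) => ℝ) finSumFinEquiv).comp
    (MeasureTheory.volume_measurePreserving_sumPiEquivProdPi_symm
      (fun _ : Fin k₁ ⊕ Fin k₂ => ℝ))

lemma measurableSet_posOrthant (k : ℕ) : MeasurableSet (posOrthant k) := by
  have : posOrthant k = Set.pi Set.univ (fun _ : Fin k => Set.Ioi (0:ℝ)) := by
    ext x; simp [posOrthant, Set.mem_pi]
  rw [this]
  exact MeasurableSet.univ_pi fun _ => measurableSet_Ioi

lemma prodE_preimage (k₁ k₂ : ℕ) :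
    prodE k₁ k₂ ⁻¹' posOrthant (k₁ + k₂) = posOrthant k₁ ×ˢ posOrthant k₂ := by
  ext ⟨x, y⟩
  constructor
  · intro h
    refine ⟨fun j => ?_, fun j => ?_⟩
    · have := h (Fin.castAdd k₂ j); rwa [prodE_castAdd] at this
    · have := h (Fin.natAdd k₁ j); rwa [prodE_natAdd] at this
  · rintro ⟨hx, hy⟩ i
    rcases finSumFinEquiv.surjective i with ⟨s, rfl⟩
    cases s with
    | inl j => rw [finSumFinEquiv_apply_left, prodE_castAdd]; exact hx j
    | inr j => rw [finSumFinEquiv_apply_right, prodE_natAdd]; exact hy j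

theorem stmt19 {k₁ k₂ : ℕ} (hk₁ : 1 ≤ k₁) (hk₂ : 1 ≤ k₂) {α₁ α₂ : ℝ}
    {g₁ : (Fin k₁ → ℝ) → ℝ} {g₂ : (Fin k₂ → ℝ) → ℝ}
    (hg₁ : IsGenHermiteKernel k₁ α₁ g₁) (hg₂ : IsGenHermiteKernel k₂ α₂ g₂)
    (hsum : -((k₁ : ℝ) + (k₂ : ℝ) + 1) / 2 < α₁ + α₂) :
    IsGenHermiteKernel (k₁ + k₂) (α₁ + α₂)
      (fun x => g₁ (fun j => x (Fin.castAdd k₂ j)) * g₂ (fun j => x (Fin.natAdd k₁ j))) := by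
  set f : (Fin (k₁ + k₂) → ℝ) → ℝ :=
    fun x => g₁ (fun j => x (Fin.castAdd k₂ j)) * g₂ (fun j => x (Fin.natAdd k₁ j)) with hf
  have hfm : Measurable f := by
    apply Measurable.mul
    · exact hg₁.measurable.comp (measurable_pi_lambda _ fun j => measurable_pi_apply _)
    · exact hg₂.measurable.comp (measurable_pi_lambda _ fun j => measurable_pi_apply _)
  -- composing with the equivalence
  have hcomp : ∀ (x : Fin k₁ → ℝ) (y : Fin k₂ → ℝ),
      f (prodE k₁ k₂ (x, y)) = g₁ x * g₂ y := by
    intro x y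
    simp only [hf]
    congr 1
    · congr 1; funext j; exact prodE_castAdd x y j
    · congr 1; funext j; exact prodE_natAdd x y j
  have hone : ∀ (x : Fin k₁ → ℝ) (y : Fin k₂ → ℝ),
      (1 : Fin (k₁+k₂) → ℝ) + prodE k₁ k₂ (x, y) = prodE k₁ k₂ (1 + x, 1 + y) := by
    intro x y
    funext i
    rcases finSumFinEquiv.surjective i with ⟨s, rfl⟩
    cases s with
    | inl j =>
        rw [finSumFinEquiv_apply_left]
        simp [prodE_castAdd]
    | inr j =>
        rw [finSumFinEquiv_apply_right]
        simp [prodE_natAdd]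
  -- the restricted measure-preserving map
  have hr : MeasurePreserving (prodE k₁ k₂)
      (volume.restrict (posOrthant k₁ ×ˢ posOrthant k₂))
      (volume.restrict (posOrthant (k₁ + k₂))) := by
    have := (prodE_mp k₁ k₂).restrict_preimage (measurableSet_posOrthant (k₁ + k₂))
    rwa [prodE_preimage] at this
  have hprodmeas : (volume : Measure ((Fin k₁ → ℝ) × (Fin k₂ → ℝ))).restrict
        (posOrthant k₁ ×ˢ posOrthant k₂)
      = (volume.restrict (posOrthant k₁)).prod (volume.restrict (posOrthant k₂)) := by
    rw [Measure.prod_restrict, ← Measure.volume_eq_prod]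
  constructor
  · exact hfm
  · intro x hx
    simp only [posOrthant, Set.mem_setOf_eq, not_forall, not_lt] at hx
    obtain ⟨i, hi⟩ := hx
    rcases finSumFinEquiv.surjective i with ⟨s, rfl⟩
    cases s with
    | inl j =>
        rw [finSumFinEquiv_apply_left] at hi
        apply mul_eq_zero_of_left
        apply hg₁.zero_off
        intro h
        exact absurd (h j) (not_lt.mpr hi)
    | inr j =>
        rw [finSumFinEquiv_apply_right] at hi
        apply mul_eq_zero_of_right
        apply hg₂.zero_off
        intro h
        exact absurd (h j) (not_lt.mpr hi)
  · -- nonzero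
    intro h
    have h1 : ∀ᵐ p ∂((volume.restrict (posOrthant k₁)).prod (volume.restrict (posOrthant k₂))),
        g₁ p.1 * g₂ p.2 = 0 := by
      rw [← hr.map_eq] at h
      have h2 := (ae_map_iff (prodE k₁ k₂).measurable.aemeasurable
        (hfm (measurableSet_singleton (0:ℝ)))).mp h
      rw [hprodmeas] at h2
      filter_upwards [h2] with p hp
      rw [← hcomp p.1 p.2]
      exact hp
    have h3 := Measure.ae_ae_of_ae_prod h1
    apply hg₁.nonzero
    filter_upwards [h3] with x hx
    by_contra hne
    apply hg₂.nonzero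
    filter_upwards [hx] with y hy
    exact (mul_eq_zero.mp hy).resolve_left hne
  · -- homog
    intro lam hlam x hx
    have hx1 : (fun j => x (Fin.castAdd k₂ j)) ∈ posOrthant k₁ := fun j => hx _
    have hx2 : (fun j => x (Fin.natAdd k₁ j)) ∈ posOrthant k₂ := fun j => hx _
    have e1 : (fun j => (lam • x) (Fin.castAdd k₂ j)) = lam • fun j => x (Fin.castAdd k₂ j) := by
      funext j; simp
    have e2 : (fun j => (lam • x) (Fin.natAdd k₁ j)) = lam • fun j => x (Fin.natAdd k₁ j) := by
      funext j; simp
    show (g₁ fun j => (lam • x) (Fin.castAdd k₂ j)) * (g₂ fun j => (lam • x) (Fin.natAdd k₁ j))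
      = lam ^ (α₁ + α₂) *
        ((g₁ fun j => x (Fin.castAdd k₂ j)) * (g₂ fun j => x (Fin.natAdd k₁ j)))
    rw [e1, e2, hg₁.homog lam hlam _ hx1, hg₂.homog lam hlam _ hx2,
      Real.rpow_add hlam]
    ring
  · -- alpha_lb
    push_cast
    linarith
  · -- alpha_ub
    have := hg₁.alpha_ub
    have := hg₂.alpha_ub
    push_cast
    linarith
  · -- int_cond
    rw [IntegrableOn]
    rw [← hr.integrable_comp_emb (prodE k₁ k₂).measurableEmbedding]
    have : (fun z => f z * f (1 + z)) ∘ (prodE k₁ k₂) =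
        fun p : (Fin k₁ → ℝ) × (Fin k₂ → ℝ) =>
          (g₁ p.1 * g₁ (1 + p.1)) * (g₂ p.2 * g₂ (1 + p.2)) := by
      funext p
      simp only [Function.comp_apply]
      rw [show p = (p.1, p.2) from rfl, hone p.1 p.2, hcomp, hcomp]
      ring
    rw [this, hprodmeas]
    exact hg₁.int_cond.mul_prod hg₂.int_cond
end
end
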